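/- For reals $n_1 \ge n_2 \ge \dots \ge n_{h'} > 0$ with $h' \le h$, $h \ge 2$, and $\sum_{i=1}^{h'} n_i = n$, we have $n_1^{1/\log_2 h} + n_2^{1/\log_2 h} \ge n^{1/\log_2 h}$ (where if $h' = 1$ we interpret $n_2 = 0$ and the inequality holds trivially since $n_1 = n$). -/

import Mathlib

/-- for reals `n₁ ≥ n₂ ≥ … ≥ n_{h'} > 0` with `1 ≤ h' ≤ h`, `h ≥ 2`, and
`∑ nᵢ = n`, one has `n₁^(1/log₂ h) + n₂^(1/log₂ h) ≥ n^(1/log₂ h)` (with `n₂`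
interpreted as `0` when `h' = 1`). -/
theorem stmt_6 (h : ℝ) (hh : 2 ≤ h) (h' : ℕ) (hh'1 : 1 ≤ h') (hh'h : (h' : ℝ) ≤ h)
    (nn : ℕ → ℝ) (n : ℝ)
    (hpos : ∀ i, 1 ≤ i → i ≤ h' → 0 < nn i)
    (hmono : ∀ i j, 1 ≤ i → i ≤ j → j ≤ h' → nn j ≤ nn i)
    (hsum : ∑ i ∈ Finset.Icc 1 h', nn i = n) :
    n ^ (1 / Real.logb 2 h) ≤
      nn 1 ^ (1 / Real.logb 2 h) +
        (if 2 ≤ h' then nn 2 ^ (1 / Real.logb 2 h) else 0) := by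
  have hhpos : (0:ℝ) < h := by linarith
  set α := 1 / Real.logb 2 h with hα
  have hL1 : 1 ≤ Real.logb 2 h := by
    calc (1:ℝ) = Real.logb 2 2 := by simp
    _ ≤ Real.logb 2 h := Real.logb_le_logb_of_le (by norm_num) (by norm_num) hh
  have hLpos : 0 < Real.logb 2 h := by linarith
  have hα0 : 0 < α := by positivity
  have hα1 : α ≤ 1 := by
    rw [hα, div_le_one hLpos]; exact hL1
  -- h ^ α = 2
  have hhα : h ^ α = 2 := by
    have h2h : h = (2:ℝ) ^ Real.logb 2 h :=
      (Real.rpow_logb (by norm_num) (by norm_num) hhpos).symm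
    rw [hα]
    nth_rewrite 1 [h2h]
    rw [← Real.rpow_mul (by norm_num), mul_one_div, div_self hLpos.ne', Real.rpow_one]
  by_cases h2 : 2 ≤ h'
  · rw [if_pos h2]
    have ha : 0 < nn 1 := hpos 1 le_rfl hh'1
    have hb : 0 < nn 2 := hpos 2 (by norm_num) h2
    have hba : nn 2 ≤ nn 1 := hmono 1 2 le_rfl (by norm_num) h2
    -- n ≤ nn 1 + (h'-1) * nn 2
    have hsplit : Finset.Icc 1 h' = Finset.cons 1 (Finset.Ioc 1 h') (by simp) :=
      Finset.Icc_eq_cons_Ioc hh'1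
    have hrest : ∑ i ∈ Finset.Ioc 1 h', nn i ≤ (h' - 1 : ℕ) * nn 2 := by
      have := Finset.sum_le_card_nsmul (Finset.Ioc 1 h') nn (nn 2)
        (fun i hi => by
          rw [Finset.mem_Ioc] at hi
          exact hmono 2 i (by norm_num) hi.1 hi.2)
      simpa [Nat.card_Ioc, nsmul_eq_mul] using this
    have hnle : n ≤ nn 1 + (h - 1) * nn 2 := by
      have h1 : ((h' : ℝ) - 1) * nn 2 ≤ (h - 1) * nn 2 := by nlinarith
      have h2' : ((h' - 1 : ℕ) : ℝ) = (h' : ℝ) - 1 := by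
        have : 1 ≤ h' := hh'1
        push_cast [this]; ring
      rw [← hsum, hsplit, Finset.sum_cons]
      calc nn 1 + ∑ i ∈ Finset.Ioc 1 h', nn i
          ≤ nn 1 + ((h' - 1 : ℕ) : ℝ) * nn 2 := by linarith [hrest]
        _ ≤ nn 1 + (h - 1) * nn 2 := by rw [h2']; linarith
    have hnpos : 0 < n := by
      rw [← hsum, hsplit, Finset.sum_cons]
      have : 0 ≤ ∑ i ∈ Finset.Ioc 1 h', nn i :=
        Finset.sum_nonneg fun i hi => by
          rw [Finset.mem_Ioc] at hi
          exact (hpos i (le_of_lt hi.1) hi.2).le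
      linarith
    set m := n / h with hm
    have hmpos : 0 < m := by positivity
    have hmα : m ^ α = n ^ α / 2 := by
      rw [hm, Real.div_rpow hnpos.le hhpos.le, hhα]
    by_cases hbm : m ≤ nn 2
    · -- both nn 1, nn 2 ≥ m, so sum of rpows ≥ 2 m^α = n^α
      have h1 : m ^ α ≤ nn 2 ^ α := Real.rpow_le_rpow hmpos.le hbm hα0.le
      have h2'' : m ^ α ≤ nn 1 ^ α := Real.rpow_le_rpow hmpos.le (hbm.trans hba) hα0.le
      have : n ^ α = 2 * m ^ α := by rw [hmα]; ring
      linarith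
    · push_neg at hbm
      -- nn 2 ∈ [0, m]; use concavity
      set t := nn 2 / m with ht
      have ht0 : 0 ≤ t := by positivity
      have ht1 : t ≤ 1 := by rw [ht, div_le_one hmpos]; exact hbm.le
      have hconc := Real.concaveOn_rpow hα0.le hα1
      -- nn 2 = (1-t)•0 + t•m
      have key1 : (1 - t) * (0:ℝ) ^ α + t * m ^ α ≤ nn 2 ^ α := by
        have := hconc.2 (Set.mem_Ici.2 le_rfl) (Set.mem_Ici.2 hmpos.le)
          (by linarith : (0:ℝ) ≤ 1 - t) ht0 (by ring)
        have heq : (1 - t) • (0:ℝ) + t • m = nn 2 := by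
          rw [ht, smul_zero, zero_add, smul_eq_mul, div_mul_cancel₀ _ hmpos.ne']
        rw [heq] at this
        simpa using this
      -- n - (h-1)*nn 2 = (1-t)•n + t•m
      have key2 : (1 - t) * n ^ α + t * m ^ α ≤ (n - (h - 1) * nn 2) ^ α := by
        have := hconc.2 (Set.mem_Ici.2 hnpos.le) (Set.mem_Ici.2 hmpos.le)
          (by linarith : (0:ℝ) ≤ 1 - t) ht0 (by ring)
        have heq : (1 - t) • n + t • m = n - (h - 1) * nn 2 := by
          simp only [smul_eq_mul, ht, hm]
          field_simp
          ring
        rw [heq] at this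
        simpa using this
      have hasub : n - (h - 1) * nn 2 ≤ nn 1 := by linarith
      have hsubpos : 0 ≤ n - (h - 1) * nn 2 := by
        have h9 : (h - 1) * nn 2 ≤ (h - 1) * m :=
          mul_le_mul_of_nonneg_left hbm.le (by linarith)
        have h10 : (h - 1) * m = n - m := by rw [hm]; field_simp
        linarith
      have key3 : (n - (h - 1) * nn 2) ^ α ≤ nn 1 ^ α :=
        Real.rpow_le_rpow hsubpos hasub hα0.le
      have hz : (0:ℝ) ^ α = 0 := Real.zero_rpow hα0.ne'
      rw [hz] at key1
      have : n ^ α = (1 - t) * n ^ α + t * m ^ α + ((1 - t) * 0 + t * m ^ α) := by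
        rw [hmα]; ring
      linarith
  · rw [if_neg h2]
    have hh'eq : h' = 1 := by omega
    subst hh'eq
    simp only [Finset.Icc_self, Finset.sum_singleton] at hsum
    rw [hsum, add_zero]
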